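/- For any K×K positive definite complex Hermitian matrix N, letting N₁ denote the diagonal matrix consisting of the diagonal entries of N, one has log det(I + N) − log det(N) ≥ log det(I + N₁) − log det(N₁). -/

import Mathlib

open Matrix ComplexOrder


set_option linter.unusedSectionVars false
set_option maxHeartbeats 1000000

section aux
variable {m n : Type*} [Fintype m] [Fintype n] [DecidableEq m] [DecidableEq n]

lemma my_diag_pos {M : Matrix n n ℂ} (hM : M.PosDef) (i : n) : 0 < M i i := by
  have := hM.dotProduct_mulVec_pos (x := Pi.single i 1) (by simp [Function.ne_iff])
  simpa [dotProduct, mulVec, Pi.single_apply] using this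

lemma my_diag_nonneg {M : Matrix n n ℂ} (hM : M.PosSemidef) (i : n) : 0 ≤ M i i := by
  have := hM.dotProduct_mulVec_nonneg (Pi.single i 1)
  simpa [dotProduct, mulVec, Pi.single_apply] using this

lemma my_blk11 {A : Matrix m m ℂ} {B : Matrix m n ℂ} {C : Matrix n m ℂ} {D : Matrix n n ℂ}
    (h : (fromBlocks A B C D).PosDef) : A.PosDef := by
  refine Matrix.PosDef.of_dotProduct_mulVec_pos ?_ ?_
  · exact (isHermitian_fromBlocks_iff.mp h.1).1
  · intro x hx
    have hne : (Sum.elim x (0 : n → ℂ)) ≠ 0 := fun h0 =>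
      hx (funext fun i => congrFun h0 (Sum.inl i))
    have := h.dotProduct_mulVec_pos hne
    simpa [dotProduct, mulVec, Fintype.sum_sum_type, fromBlocks] using this

lemma my_blk22 {A : Matrix m m ℂ} {B : Matrix m n ℂ} {C : Matrix n m ℂ} {D : Matrix n n ℂ}
    (h : (fromBlocks A B C D).PosDef) : D.PosDef := by
  refine Matrix.PosDef.of_dotProduct_mulVec_pos ?_ ?_
  · exact (isHermitian_fromBlocks_iff.mp h.1).2.2.2
  · intro x hx
    have hne : (Sum.elim (0 : m → ℂ) x) ≠ 0 := fun h0 =>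
      hx (funext fun i => congrFun h0 (Sum.inr i))
    have := h.dotProduct_mulVec_pos hne
    simpa [dotProduct, mulVec, Fintype.sum_sum_type, fromBlocks] using this

lemma my_schur_posdef {A : Matrix m m ℂ} {B : Matrix m n ℂ} {D : Matrix n n ℂ}
    (hA : A.PosDef) [Invertible A]
    (h : (fromBlocks A B Bᴴ D).PosDef) : (D - Bᴴ * A⁻¹ * B).PosDef := by
  refine Matrix.PosDef.of_dotProduct_mulVec_pos ?_ ?_
  · exact (IsHermitian.fromBlocks₁₁ B D hA.1).mp h.1
  · intro y hy
    have key := schur_complement_eq₁₁ (α := ℂ) B D (-((A⁻¹ * B) *ᵥ y)) y hA.1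
    have hne : (Sum.elim (-((A⁻¹ * B) *ᵥ y)) y) ≠ 0 := fun h0 =>
      hy (funext fun i => congrFun h0 (Sum.inr i))
    have hpos := h.dotProduct_mulVec_pos hne
    rw [dotProduct_mulVec, key, neg_add_cancel] at hpos
    simpa [dotProduct_mulVec] using hpos

lemma my_inv_sub_inv {A : Matrix m m ℂ} (hA : A.PosDef) : (A⁻¹ - (A + 1)⁻¹).PosDef := by
  have hA1 : (A + 1).PosDef := hA.add Matrix.PosDef.one
  have hAA : (A * (A + 1)).PosDef := by
    have h1 : (A * A).PosSemidef := by
      have := posSemidef_conjTranspose_mul_self A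
      rwa [hA.1.eq] at this
    have := hA.add_posSemidef h1
    have heq : A * (A + 1) = A + A * A := by
      rw [Matrix.mul_add, Matrix.mul_one, add_comm]
    rwa [heq]
  have hdetA : IsUnit A.det := hA.det_pos.ne'.isUnit
  have hdetA1 : IsUnit (A + 1).det := hA1.det_pos.ne'.isUnit
  have key : (A * (A + 1))⁻¹ = A⁻¹ - (A + 1)⁻¹ := by
    apply Matrix.inv_eq_right_inv
    have c : A * (A + 1) = (A + 1) * A := by
      rw [Matrix.mul_add, Matrix.add_mul, Matrix.mul_one, Matrix.one_mul]
    have t1 : A * (A + 1) * (A + 1)⁻¹ = A := by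
      rw [Matrix.mul_assoc, Matrix.mul_nonsing_inv _ hdetA1, Matrix.mul_one]
    have t2 : A * (A + 1) * A⁻¹ = A + 1 := by
      rw [c, Matrix.mul_assoc, Matrix.mul_nonsing_inv _ hdetA, Matrix.mul_one]
    rw [Matrix.mul_sub, t1, t2]
    abel
  rw [← key]
  exact hAA.inv

lemma my_posdef_reindex {M : Matrix n n ℂ} (hM : M.PosDef) (e : m ≃ n) :
    (M.submatrix e e).PosDef := by
  refine Matrix.PosDef.of_dotProduct_mulVec_pos ?_ ?_
  · exact (isHermitian_submatrix_equiv e).mpr hM.1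
  · intro x hx
    have hx' : x ∘ e.symm ≠ 0 := fun h => hx (by ext i; simpa using congrFun h (e i))
    have h2 := hM.dotProduct_mulVec_pos hx'
    have key : dotProduct (star x) ((M.submatrix e e) *ᵥ x) =
        dotProduct (star (x ∘ e.symm)) (M *ᵥ (x ∘ e.symm)) := by
      rw [submatrix_mulVec_equiv]
      simp only [dotProduct, Function.comp]
      exact Fintype.sum_equiv e _ _ (fun i => by simp)
    rw [key]; exact h2

end aux

lemma my_scalar {Adet A1det P P1 dr tr sr : ℝ}
    (hA1det : 0 < A1det) (hP : 0 < P)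
    (hdt : 0 < dr - tr) (hs : 0 ≤ sr) (hst : sr ≤ tr)
    (hdr : 0 < dr)
    (ih : Adet * P1 ≤ A1det * P) :
    Adet * (dr - tr) * (P1 * (dr + 1)) ≤ A1det * (dr + 1 - sr) * (P * dr) := by
  have q1 : 0 < (dr - tr) * (dr + 1) := mul_pos hdt (by linarith)
  have step1 : (dr - tr) * (dr + 1) ≤ (dr + 1 - sr) * dr := by
    nlinarith [mul_le_mul_of_nonneg_right hst hdr.le]
  calc Adet * (dr - tr) * (P1 * (dr + 1)) = (Adet * P1) * ((dr - tr) * (dr + 1)) := by ring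
    _ ≤ (A1det * P) * ((dr - tr) * (dr + 1)) := mul_le_mul_of_nonneg_right ih q1.le
    _ ≤ (A1det * P) * ((dr + 1 - sr) * dr) :=
        mul_le_mul_of_nonneg_left step1 (mul_pos hA1det hP).le
    _ = A1det * (dr + 1 - sr) * (P * dr) := by ring

lemma cpos_re {z : ℂ} (h : 0 < z) : 0 < z.re ∧ z.im = 0 := by
  rw [Complex.lt_def] at h
  simpa using ⟨h.1, h.2.symm⟩

lemma cnonneg_re {z : ℂ} (h : 0 ≤ z) : 0 ≤ z.re ∧ z.im = 0 := by
  rw [Complex.le_def] at h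
  simpa using ⟨h.1, h.2.symm⟩

lemma my_main : ∀ (K : ℕ) (N : Matrix (Fin K) (Fin K) ℂ), N.PosDef →
    N.det.re * ∏ i, ((N i i).re + 1) ≤ (N + 1).det.re * ∏ i, (N i i).re := by
  intro K
  induction K with
  | zero =>
      intro N _
      simp [Matrix.det_fin_zero]
  | succ k ihK =>
      intro N hN
      set e := (finSumFinEquiv : Fin k ⊕ Fin 1 ≃ Fin (k + 1)) with he
      set M := N.submatrix e e with hMdef
      have hM : M.PosDef := my_posdef_reindex hN e
      set A := M.toBlocks₁₁ with hAdef
      set B := M.toBlocks₁₂ with hBdef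
      set D := M.toBlocks₂₂ with hDdef
      have hblocks : M = fromBlocks A B Bᴴ D := by
        have h21 : M.toBlocks₂₁ = Bᴴ := by
          ext i j
          have := congrFun (congrFun hM.1 (Sum.inr i)) (Sum.inl j)
          rw [conjTranspose_apply] at this
          exact this.symm
        rw [← fromBlocks_toBlocks M, h21]
      have hA : A.PosDef := my_blk11 (hblocks ▸ hM)
      have hD : D.PosDef := my_blk22 (hblocks ▸ hM)
      have hA1 : (A + 1).PosDef := hA.add Matrix.PosDef.one
      haveI : Invertible A := A.invertibleOfIsUnitDet hA.det_pos.ne'.isUnit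
      haveI : Invertible (A + 1) := (A + 1).invertibleOfIsUnitDet hA1.det_pos.ne'.isUnit
      have hM1 : (M + 1).PosDef := hM.add Matrix.PosDef.one
      have hblocks1 : M + 1 = fromBlocks (A + 1) B Bᴴ (D + 1) := by
        rw [hblocks, ← fromBlocks_one, fromBlocks_add, add_zero, add_zero]
      have hS : (D - Bᴴ * A⁻¹ * B).PosDef := my_schur_posdef hA (hblocks ▸ hM)
      have hS' : ((D + 1) - Bᴴ * (A + 1)⁻¹ * B).PosDef :=
        my_schur_posdef hA1 (hblocks1 ▸ hM1)
      -- scalar quantities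
      set d := D 0 0 with hd
      set t := (Bᴴ * A⁻¹ * B) 0 0 with ht
      set s := (Bᴴ * (A + 1)⁻¹ * B) 0 0 with hs
      -- determinant identities
      have hMdet : M.det = A.det * (d - t) := by
        rw [hblocks, det_fromBlocks₁₁, Matrix.invOf_eq_nonsing_inv, det_fin_one,
          Matrix.sub_apply]
      have hM1det : (M + 1).det = (A + 1).det * (d + 1 - s) := by
        rw [hblocks1, det_fromBlocks₁₁, Matrix.invOf_eq_nonsing_inv, det_fin_one,
          Matrix.sub_apply, Matrix.add_apply, Matrix.one_apply_eq]
      have hNdet : N.det = A.det * (d - t) := by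
        rw [← hMdet, hMdef, det_submatrix_equiv_self]
      have hN1det : (N + 1).det = (A + 1).det * (d + 1 - s) := by
        rw [← hM1det, hMdef]
        have heq : N.submatrix ⇑e ⇑e + 1 = (N + 1).submatrix ⇑e ⇑e := by
          ext i j
          simp [Matrix.submatrix_apply, Matrix.one_apply]
        rw [heq, det_submatrix_equiv_self]
      -- real part facts
      have hdt_re : 0 < d.re - t.re := by
        have h := (cpos_re (my_diag_pos hS 0)).1
        simpa [Matrix.sub_apply, Complex.sub_re] using h
      obtain ⟨hdr_re, hdr_im⟩ := cpos_re (my_diag_pos hD 0)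
      obtain ⟨hAdet_re, hAdet_im⟩ := cpos_re hA.det_pos
      obtain ⟨hA1det_re, hA1det_im⟩ := cpos_re hA1.det_pos
      have hs_nonneg : 0 ≤ s.re ∧ s.im = 0 := by
        have : (Bᴴ * (A + 1)⁻¹ * B).PosSemidef :=
          (hA1.inv.posSemidef).conjTranspose_mul_mul_same B
        exact cnonneg_re (my_diag_nonneg this 0)
      have hst : s.re ≤ t.re := by
        have hpsd : (Bᴴ * (A⁻¹ - (A + 1)⁻¹) * B).PosSemidef :=
          ((my_inv_sub_inv hA).posSemidef).conjTranspose_mul_mul_same B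
        have heq : Bᴴ * (A⁻¹ - (A + 1)⁻¹) * B = Bᴴ * A⁻¹ * B - Bᴴ * (A + 1)⁻¹ * B := by
          rw [Matrix.mul_sub, Matrix.sub_mul]
        have := cnonneg_re (my_diag_nonneg (heq ▸ hpsd) 0)
        rw [Matrix.sub_apply] at this
        simp only [Complex.sub_re] at this
        linarith [this.1]
      -- real part of determinants
      have hNdet_re : N.det.re = A.det.re * (d.re - t.re) := by
        rw [hNdet, Complex.mul_re, hAdet_im]
        simp [Complex.sub_re]
      have hN1det_re : (N + 1).det.re = (A + 1).det.re * (d.re + 1 - s.re) := by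
        rw [hN1det, Complex.mul_re, hA1det_im]
        simp [Complex.sub_re, Complex.add_re]
      -- diagonal products
      have hdiag : ∀ j : Fin k, N (e (Sum.inl j)) (e (Sum.inl j)) = A j j := fun j => rfl
      have hdiag1 : N (e (Sum.inr 0)) (e (Sum.inr 0)) = d := rfl
      have hprod : ∀ (f : ℂ → ℝ), (∏ i, f (N i i)) = (∏ j, f (A j j)) * f d := by
        intro f
        rw [← Equiv.prod_comp e (fun i => f (N i i)), Fintype.prod_sum_type]
        simp [hdiag, hdiag1]
      have hP : 0 < ∏ j, (A j j).re :=
        Finset.prod_pos fun j _ => (cpos_re (my_diag_pos hA j)).1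
      -- conclude
      rw [hNdet_re, hN1det_re, hprod (fun z => z.re + 1), hprod (fun z => z.re)]
      exact my_scalar hA1det_re hP hdt_re hs_nonneg.1 hst hdr_re (ihK A hA)

/-- For a K×K positive definite (Hermitian) complex matrix `N`, with `N₁` its diagonal
part, `log det(I + N) − log det N ≥ log det(I + N₁) − log det N₁`
(determinants taken as their real parts, which are the actual positive real values). -/
theorem stmt0 (K : ℕ) (N : Matrix (Fin K) (Fin K) ℂ)
    (hN : N.PosDef) :
    Real.log ((Matrix.diagonal (fun i => N i i) + 1).det.re) -
        Real.log ((Matrix.diagonal (fun i => N i i)).det.re) ≤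
      Real.log ((N + 1).det.re) - Real.log (N.det.re) := by
  have him : ∀ i, (N i i) = ((N i i).re : ℂ) := fun i => by
    have h := (cpos_re (my_diag_pos hN i)).2
    apply Complex.ext <;> simp [h]
  have h1 : (Matrix.diagonal (fun i => N i i)).det.re = ∏ i, (N i i).re := by
    rw [det_diagonal]
    rw [show ∏ i, N i i = ((∏ i, (N i i).re : ℝ) : ℂ) by
      rw [Complex.ofReal_prod]; exact Finset.prod_congr rfl fun i _ => him i]
    exact Complex.ofReal_re _
  have h2 : (Matrix.diagonal (fun i => N i i) + 1).det.re = ∏ i, ((N i i).re + 1) := by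
    rw [show (Matrix.diagonal (fun i => N i i) + (1 : Matrix (Fin K) (Fin K) ℂ))
        = Matrix.diagonal (fun i => N i i + 1) by
      rw [← Matrix.diagonal_one, Matrix.diagonal_add], det_diagonal]
    rw [show ∏ i, (N i i + 1) = ((∏ i, ((N i i).re + 1) : ℝ) : ℂ) by
      rw [Complex.ofReal_prod]
      refine Finset.prod_congr rfl fun i _ => ?_
      rw [Complex.ofReal_add, ← him i, Complex.ofReal_one]]
    exact Complex.ofReal_re _
  have hP : 0 < ∏ i, (N i i).re :=
    Finset.prod_pos fun i _ => (cpos_re (my_diag_pos hN i)).1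
  have hP1 : 0 < ∏ i, ((N i i).re + 1) :=
    Finset.prod_pos fun i _ => by linarith [(cpos_re (my_diag_pos hN i)).1]
  have hY : 0 < N.det.re := (cpos_re hN.det_pos).1
  have hX : 0 < (N + 1).det.re := (cpos_re (hN.add Matrix.PosDef.one).det_pos).1
  have main := my_main K N hN
  have hdiv : (∏ i, ((N i i).re + 1)) / (∏ i, (N i i).re) ≤ (N + 1).det.re / N.det.re := by
    rw [div_le_div_iff₀ hP hY]
    nlinarith [main]
  rw [h1, h2]
  calc Real.log (∏ i, ((N i i).re + 1)) - Real.log (∏ i, (N i i).re)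
      = Real.log ((∏ i, ((N i i).re + 1)) / (∏ i, (N i i).re)) :=
        (Real.log_div hP1.ne' hP.ne').symm
    _ ≤ Real.log ((N + 1).det.re / N.det.re) :=
        Real.log_le_log (by positivity) hdiv
    _ = Real.log ((N + 1).det.re) - Real.log (N.det.re) :=
        Real.log_div hX.ne' hY.ne'
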